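/- For every k ≥ 2, the first-order part of BWT_k is not strongly Weihrauch reducible to BWT_k. -/

import Mathlib

open Classical

/-- A Turing functional, presented by a monotone computable map on finite prefixes
of the oracle. -/
structure Functional where
  eval : List ℕ → ℕ → Option ℕ
  mono : ∀ σ τ x y, σ <+: τ → eval σ x = some y → eval τ x = some y
  comp : Computable₂ eval

/-- The finite initial segment of `f` of length `k`. -/
def initSeg (f : ℕ → ℕ) (k : ℕ) : List ℕ := (List.range k).map f

/-- `Φ(f)(x)` converges with value `y`. -/
def Functional.conv (Φ : Functional) (f : ℕ → ℕ) (x y : ℕ) : Prop :=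
  ∃ k, Φ.eval (initSeg f k) x = some y

/-- Total application: `Φ(f) = g`. -/
def Functional.Total (Φ : Functional) (f g : ℕ → ℕ) : Prop :=
  ∀ x, Φ.conv f x (g x)

/-- The Turing join of two elements of Baire space. -/
def join (f g : ℕ → ℕ) : ℕ → ℕ := fun n => if n % 2 = 0 then f (n / 2) else g (n / 2)

/-- The embedding of `ℕ` into Baire space: `n` is identified with `n,0,0,0,…`. -/
def natSeq (n : ℕ) : ℕ → ℕ := fun i => if i = 0 then n else 0

/-- A problem: a partial multifunction on Baire space, given by its domain
(the set of instances) and, for each instance, its set of solutions. -/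
structure Problem where
  dom : Set (ℕ → ℕ)
  sol : (ℕ → ℕ) → Set (ℕ → ℕ)

/-- Weihrauch reducibility `Q ≤_W P`. -/
def WRed (Q P : Problem) : Prop :=
  ∃ Φ Ψ : Functional, ∀ f ∈ Q.dom, ∃ h, Φ.Total f h ∧ h ∈ P.dom ∧
    ∀ g ∈ P.sol h, ∃ y, Ψ.Total (join f g) y ∧ y ∈ Q.sol f

/-- Strong Weihrauch reducibility `Q ≤_sW P`: the backward functional only sees the solution. -/
def SRed (Q P : Problem) : Prop :=
  ∃ Φ Ψ : Functional, ∀ f ∈ Q.dom, ∃ h, Φ.Total f h ∧ h ∈ P.dom ∧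
    ∀ g ∈ P.sol h, ∃ y, Ψ.Total g y ∧ y ∈ Q.sol f

/-- Weihrauch equivalence. -/
def WEquiv (Q P : Problem) : Prop := WRed Q P ∧ WRed P Q

/-- Strong Weihrauch equivalence. -/
def SEquiv (Q P : Problem) : Prop := SRed Q P ∧ SRed P Q

/-- A problem is first-order if all its solutions are natural numbers
(under the identification of `n` with `natSeq n`). -/
def FirstOrder (P : Problem) : Prop :=
  ∀ f ∈ P.dom, ∀ g ∈ P.sol f, ∃ n, g = natSeq n

/-- The code of a functional as an element of Baire space (the graph of its
prefix-evaluation function). -/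
def Functional.graph (Φ : Functional) : ℕ → ℕ :=
  fun n => Encodable.encode (Φ.eval (Denumerable.ofNat (List ℕ) n.unpair.1) n.unpair.2)

/-- The first-order part `¹P` of a problem `P`: instances are (codes of) triples
`⟨f,Φ,Ψ⟩` with `Φ(f) ∈ dom(P)` and `Ψ(f,g)(0)↓` for all `g ∈ P(Φ(f))`; the
solutions are all values `Ψ(f,g)(0)` for `g ∈ P(Φ(f))`. -/
def FOPart (P : Problem) : Problem where
  dom := { h | ∃ (f : ℕ → ℕ) (Φ Ψ : Functional), h = join f (join Φ.graph Ψ.graph) ∧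
    ∃ p, Φ.Total f p ∧ p ∈ P.dom ∧ ∀ g ∈ P.sol p, ∃ y, Ψ.conv (join f g) 0 y }
  sol h := { w | ∃ (f : ℕ → ℕ) (Φ Ψ : Functional) (p g : ℕ → ℕ) (y : ℕ),
    h = join f (join Φ.graph Ψ.graph) ∧ Φ.Total f p ∧ p ∈ P.dom ∧ g ∈ P.sol p ∧
    Ψ.conv (join f g) 0 y ∧ w = natSeq y }

/-- `P` is computably true: every instance computes one of its solutions. -/
def ComputablyTrue (P : Problem) : Prop :=
  ∀ f ∈ P.dom, ∃ g ∈ P.sol f, ∃ Φ : Functional, Φ.Total f g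

/-- `P` is uniformly computably true: a single functional solves every instance. -/
def UnifCompTrue (P : Problem) : Prop :=
  ∃ Φ : Functional, ∀ f ∈ P.dom, ∃ g, Φ.Total f g ∧ g ∈ P.sol f

/-- `σ` is a finite initial segment of some `P`-solution to `f`. -/
def Extendible (P : Problem) (f : ℕ → ℕ) (σ : List ℕ) : Prop :=
  ∃ g ∈ P.sol f, σ = initSeg g σ.length

/-- `P` is undiagonalizable: the set of strings extendible to a solution is
uniformly decidable from the instance. -/
def Undiag (P : Problem) : Prop :=
  ∃ Γ : Functional, ∀ f ∈ P.dom, ∀ σ : List ℕ,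
    (Extendible P f σ → Γ.conv f (Encodable.encode σ) 1) ∧
    (¬ Extendible P f σ → Γ.conv f (Encodable.encode σ) 0)

/-- `RT¹_k`: instances are colorings `c : ℕ → k`; solutions are (characteristic
functions of) infinite sets on which `c` is constant. -/
def RT1 (k : ℕ) : Problem where
  dom := { c | ∀ x, c x < k }
  sol c := { h | (∀ x, h x ≤ 1) ∧ {x | h x = 1}.Infinite ∧ ∃ i, ∀ x, h x = 1 → c x = i }

/-- `BWT_k`: instances are colorings `c : ℕ → k`; solutions are the colors
attained infinitely often. -/
def BWT (k : ℕ) : Problem where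
  dom := { c | ∀ x, c x < k }
  sol c := { w | ∃ i, i < k ∧ {x | c x = i}.Infinite ∧ w = natSeq i }

/-- The constant functional with value `m`. -/
def constFunc (m : ℕ) : Functional where
  eval := fun _ _ => some m
  mono := fun _ _ _ _ _ h => h
  comp := Computable.const (some m)

lemma initSeg_prefix (f : ℕ → ℕ) {a b : ℕ} (h : a ≤ b) :
    initSeg f a <+: initSeg f b := by
  have : List.range a <+: List.range b := by
    rw [show List.range a = (List.range b).take a by simp [List.take_range, Nat.min_eq_left h]]
    exact List.take_prefix a (List.range b)
  exact this.map f

lemma Functional.conv_unique (Φ : Functional) {f : ℕ → ℕ} {x y y' : ℕ}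
    (h : Φ.conv f x y) (h' : Φ.conv f x y') : y = y' := by
  obtain ⟨a, ha⟩ := h
  obtain ⟨b, hb⟩ := h'
  rcases le_total a b with hab | hab
  · have := Φ.mono _ _ x y (initSeg_prefix f hab) ha
    rw [this] at hb
    exact (Option.some_injective _ hb)
  · have := Φ.mono _ _ x y' (initSeg_prefix f hab) hb
    rw [this] at ha
    exact (Option.some_injective _ ha).symm

lemma Functional.total_unique (Φ : Functional) {f y y' : ℕ → ℕ}
    (h : Φ.Total f y) (h' : Φ.Total f y') : y = y' :=
  funext fun x => Φ.conv_unique (h x) (h' x)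

lemma join_right_eq {f f' a a' : ℕ → ℕ} (h : join f a = join f' a') : a = a' := by
  funext n
  have := congrFun h (2 * n + 1)
  have h1 : (2 * n + 1) % 2 = 1 := by omega
  have h2 : (2 * n + 1) / 2 = n := by omega
  simpa [join, h1, h2] using this

lemma graph_eval {Φ Ψ : Functional} (h : Φ.graph = Ψ.graph) : Φ.eval = Ψ.eval := by
  funext σ x
  have := congrFun h (Nat.pair (Encodable.encode σ) x)
  simp only [Functional.graph, Nat.unpair_pair, Denumerable.ofNat_encode] at this
  exact Encodable.encode_injective this

lemma exists_infinite_color {k : ℕ} (hk : 0 < k) {h : ℕ → ℕ} (hh : ∀ x, h x < k) :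
    ∃ i, i < k ∧ {x | h x = i}.Infinite := by
  by_contra hc
  push_neg at hc
  have hfin : ∀ i ∈ Finset.range k, {x | h x = i}.Finite := by
    intro i hi
    have := hc i (Finset.mem_range.1 hi)
    exact this
  have hsub : (Set.univ : Set ℕ) ⊆ ⋃ i ∈ Finset.range k, {x | h x = i} := by
    intro x _
    simp only [Set.mem_iUnion]
    exact ⟨h x, Finset.mem_range.2 (hh x), rfl⟩
  exact Set.infinite_univ ((Set.Finite.biUnion (Finset.range k).finite_toSet hfin).subset hsub)

lemma natSeq_injective : Function.Injective natSeq := by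
  intro a b hab
  have := congrFun hab 0
  simpa [natSeq] using this

theorem FOPart_BWT_not_SRed_BWT (k : ℕ) (hk : 2 ≤ k) :
    ¬ SRed (FOPart (BWT k)) (BWT k) := by
  rintro ⟨Φ, Ψ, hred⟩
  have key : ∀ m : ℕ, ∃ i, i < k ∧ Ψ.Total (natSeq i) (natSeq m) := by
    intro m
    have hdom : join (fun _ => 0) (join (constFunc 0).graph (constFunc m).graph)
        ∈ (FOPart (BWT k)).dom := by
      refine ⟨fun _ => 0, constFunc 0, constFunc m, rfl, fun _ => 0,
        fun x => ⟨0, rfl⟩, fun x => by show (0:ℕ) < k; omega, ?_⟩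
      intro g hg
      exact ⟨m, 0, rfl⟩
    obtain ⟨h, hTot, hhdom, hsol⟩ := hred _ hdom
    obtain ⟨i, hik, hinf⟩ := exists_infinite_color (by omega) hhdom
    obtain ⟨y, hy, hysol⟩ := hsol (natSeq i) ⟨i, hik, hinf, rfl⟩
    obtain ⟨f', Φ', Ψ', p, g, y', heq, _, _, _, hconv, hw⟩ := hysol
    have hg2 : join (constFunc 0).graph (constFunc m).graph = join Φ'.graph Ψ'.graph :=
      join_right_eq heq
    have hgr : Ψ'.graph = (constFunc m).graph := (join_right_eq hg2).symm
    have heval : Ψ'.eval = (constFunc m).eval := graph_eval hgr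
    obtain ⟨n, hn⟩ := hconv
    rw [heval] at hn
    have hy'm : y' = m := (Option.some_injective _ (show some m = some y' from hn)).symm
    subst hy'm
    rw [hw] at hy
    exact ⟨i, hik, hy⟩
  choose F hF hT using key
  obtain ⟨m, hm, m', hm', hne, hFeq⟩ :=
    Finset.exists_ne_map_eq_of_card_lt_of_maps_to
      (s := Finset.range (k + 1)) (t := Finset.range k) (by simp)
      (fun m _ => Finset.mem_range.2 (hF m))
  have htot' : Ψ.Total (natSeq (F m)) (natSeq m') := by
    rw [hFeq]; exact hT m'
  have := Ψ.total_unique (hT m) htot'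
  exact hne (natSeq_injective this)
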